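/- arXiv:1010.1952 — 3 statements merged into one kernel-verified Lean document; each statement's English description precedes it below -/
import Mathlib

section
/- The 2×2 matrix B0 with entries B0 = [[a(b−c)/(a−b), r],[ab(a−c)(c−b)/(r(a−b)²), b(c−a)/(a−b)]] (for a ≠ b and r ≠ 0) has eigenvalues 0 and −c, and the matrix B1 = [[a(c−a)/(a−b), −r],[−ab(a−c)(c−b)/(r(a−b)²), b(b−c)/(a−b)]] has eigenvalues 0 and c−a−b; moreover B0 + B1 = diag(−a, −b). -/
open Matrix

/-- The matrix `B0` of Proposition "matrices", case (1). -/
noncomputable def B0mat (a b c r : ℂ) : Matrix (Fin 2) (Fin 2) ℂ :=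
  !![a*(b-c)/(a-b), r;
     a*b*(a-c)*(c-b)/(r*(a-b)^2), b*(c-a)/(a-b)]

/-- The matrix `B1` of Proposition "matrices", case (1). -/
noncomputable def B1mat (a b c r : ℂ) : Matrix (Fin 2) (Fin 2) ℂ :=
  !![a*(c-a)/(a-b), -r;
     -(a*b*(a-c)*(c-b)/(r*(a-b)^2)), b*(b-c)/(a-b)]

/-- `B0` has eigenvalues `0` and `−c`, `B1` has eigenvalues `0` and `c − a − b`
(characterized as the roots of `det(λI − M) = 0`), and `B0 + B1 = diag(−a, −b)`. -/
theorem B0_B1_eigenvalues_and_sum (a b c r : ℂ) (hab : a ≠ b) (hr : r ≠ 0) :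
    (∀ μ : ℂ, (μ • (1 : Matrix (Fin 2) (Fin 2) ℂ) - B0mat a b c r).det = 0 ↔
      (μ = 0 ∨ μ = -c)) ∧
    (∀ μ : ℂ, (μ • (1 : Matrix (Fin 2) (Fin 2) ℂ) - B1mat a b c r).det = 0 ↔
      (μ = 0 ∨ μ = c - a - b)) ∧
    B0mat a b c r + B1mat a b c r = !![-a, 0; 0, -b] := by
  have hab' : a - b ≠ 0 := sub_ne_zero.mpr hab
  refine ⟨?_, ?_, ?_⟩
  · intro μ
    have hdet : (μ • (1 : Matrix (Fin 2) (Fin 2) ℂ) - B0mat a b c r).det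
        = μ * (μ + c) := by
      simp [B0mat, det_fin_two, Matrix.smul_apply, Matrix.one_apply]
      field_simp
      ring
    rw [hdet]
    constructor
    · intro h
      rcases mul_eq_zero.mp h with h | h
      · exact Or.inl h
      · exact Or.inr (by linear_combination h)
    · rintro (rfl | rfl) <;> ring
  · intro μ
    have hdet : (μ • (1 : Matrix (Fin 2) (Fin 2) ℂ) - B1mat a b c r).det
        = μ * (μ - (c - a - b)) := by
      simp [B1mat, det_fin_two, Matrix.smul_apply, Matrix.one_apply]
      field_simp
      ring
    rw [hdet]
    constructor
    · intro h
      rcases mul_eq_zero.mp h with h | h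
      · exact Or.inl h
      · exact Or.inr (by linear_combination h)
    · rintro (rfl | rfl) <;> ring
  · ext i j
    fin_cases i <;> fin_cases j <;>
      simp [B0mat, B1mat] <;> field_simp <;> ring
end

section
/- Let θ0+θx+θ1+θ∞ = 0 and θ0 = −2. Then the rational function y(x) = [ (2−(θ∞+θ1)+θ1 x)² − 2 + θ∞ + θ1 − θ1 x² ] / [ (1−θ∞)(2−(θ∞+θ1)+θ1 x) ] solves the Painlevé VI equation with parameters (θ0, θx, θ1, θ∞) = (−2, 2−θ1−θ∞, θ1, θ∞). -/
/-- The residual of the Painlevé VI equation with parameters `(θ0, θx, θ1, θ∞)`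
(so that α = (θ∞−1)²/2, −β = θ0²/2, γ = θ1²/2, 1/2 − δ = θx²/2). -/
noncomputable def pviRes (th0 thx th1 thi y y' y'' x : ℂ) : ℂ :=
  y'' - ((1/2) * (1/y + 1/(y-1) + 1/(y-x)) * y'^2
    - (1/x + 1/(x-1) + 1/(y-x)) * y'
    + (y*(y-1)*(y-x))/(x^2*(x-1)^2) *
      ((thi-1)^2/2 + (-(th0^2/2))*x/y^2 + (th1^2/2)*(x-1)/(y-1)^2
        + (1/2 - thx^2/2)*(x*(x-1))/(y-x)^2))

/-- The rational solution for `θ0 = −2`: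
`y(x) = [(2−(θ∞+θ1)+θ1 x)² − 2 + θ∞ + θ1 − θ1 x²] / [(1−θ∞)(2−(θ∞+θ1)+θ1 x)]`. -/
noncomputable def ratY2 (th1 thi : ℂ) : ℂ → ℂ :=
  fun x => ((2 - (thi + th1) + th1*x)^2 - 2 + thi + th1 - th1*x^2)
    / ((1 - thi)*(2 - (thi + th1) + th1*x))

/-- explicit first derivative of `ratY2` -/
noncomputable def ratY2' (th1 thi : ℂ) : ℂ → ℂ :=
  fun x => th1 * ((2 - (thi + th1) + th1*x - x)^2 + (th1-1)*x^2 + (2 - thi - th1))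
    / ((1 - thi)*(2 - (thi + th1) + th1*x)^2)

/-- explicit second derivative of `ratY2` -/
noncomputable def ratY2'' (th1 thi : ℂ) : ℂ → ℂ :=
  fun x => (-2*th1*(2 - thi - th1)*(2 - thi))
    / ((1 - thi)*(2 - (thi + th1) + th1*x)^3)

lemma hasDerivAt_L (th1 thi x : ℂ) :
    HasDerivAt (fun z => 2 - (thi + th1) + th1*z) th1 x := by
  simpa using ((hasDerivAt_id x).const_mul th1).const_add (2 - (thi + th1))

lemma hasDerivAt_ratY2 (th1 thi : ℂ) (hthi : thi ≠ 1) (x : ℂ)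
    (hden : 2 - (thi + th1) + th1*x ≠ 0) :
    HasDerivAt (ratY2 th1 thi) (ratY2' th1 thi x) x := by
  have h1 : (1:ℂ) - thi ≠ 0 := sub_ne_zero.mpr (Ne.symm hthi)
  have hL := hasDerivAt_L th1 thi x
  have hx2 : HasDerivAt (fun z : ℂ => th1*z^2) (th1*(2*x)) x := by
    simpa [mul_assoc] using (hasDerivAt_pow 2 x).const_mul th1
  have hN : HasDerivAt
      (fun z => (2 - (thi + th1) + th1*z)^2 - 2 + thi + th1 - th1*z^2)
      (2 * (2 - (thi + th1) + th1*x)^1 * th1 - th1*(2*x)) x :=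
    ((((hL.pow 2).sub_const 2).add_const thi).add_const th1).sub hx2
  have hD : HasDerivAt (fun z => (1 - thi)*(2 - (thi + th1) + th1*z))
      ((1 - thi)*th1) x := hL.const_mul (1 - thi)
  have hD0 : (1 - thi)*(2 - (thi + th1) + th1*x) ≠ 0 := mul_ne_zero h1 hden
  have := hN.div hD hD0
  convert this using 1
  · rfl
  · rfl
  · rfl
  unfold ratY2'
  field_simp
  ring

lemma hasDerivAt_ratY2' (th1 thi : ℂ) (hthi : thi ≠ 1) (x : ℂ)
    (hden : 2 - (thi + th1) + th1*x ≠ 0) :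
    HasDerivAt (ratY2' th1 thi) (ratY2'' th1 thi x) x := by
  have h1 : (1:ℂ) - thi ≠ 0 := sub_ne_zero.mpr (Ne.symm hthi)
  have hL := hasDerivAt_L th1 thi x
  have hLx : HasDerivAt (fun z : ℂ => 2 - (thi + th1) + th1*z - z) (th1 - 1) x :=
    hL.sub (hasDerivAt_id x)
  have hx2 : HasDerivAt (fun z : ℂ => (th1-1)*z^2) ((th1-1)*(2*x)) x := by
    simpa [mul_assoc] using (hasDerivAt_pow 2 x).const_mul (th1-1)
  have hP : HasDerivAt
      (fun z => th1 * ((2 - (thi + th1) + th1*z - z)^2 + (th1-1)*z^2 + (2 - thi - th1)))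
      (th1 * (2 * (2 - (thi + th1) + th1*x - x)^1 * (th1-1) + (th1-1)*(2*x))) x :=
    (((hLx.pow 2).add hx2).add_const (2 - thi - th1)).const_mul th1
  have hQ : HasDerivAt (fun z => (1 - thi)*(2 - (thi + th1) + th1*z)^2)
      ((1 - thi)*(2*(2 - (thi + th1) + th1*x)^1*th1)) x := (hL.pow 2).const_mul (1 - thi)
  have hQ0 : (1 - thi)*(2 - (thi + th1) + th1*x)^2 ≠ 0 :=
    mul_ne_zero h1 (pow_ne_zero 2 hden)
  have := hP.div hQ hQ0
  convert this using 1
  · rfl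
  · rfl
  · rfl
  unfold ratY2''
  field_simp
  ring

set_option maxHeartbeats 2000000 in
/-- Any function satisfying the Riccati relation (and its derivative) solves PVI. -/
lemma riccati_pvi (th1 thi Y Y1 Y2 x : ℂ)
    (hx0 : x ≠ 0) (hx1 : x - 1 ≠ 0)
    (hY0 : Y ≠ 0) (hY1 : Y - 1 ≠ 0) (hYx : Y - x ≠ 0)
    (h1 : x*(x-1)*Y1 = (1-thi)*Y^2 + ((2-th1)*x + (thi+th1-1))*Y - 2*x)
    (h2 : x*(x-1)*Y2 = 2*(1-thi)*Y*Y1 + (2-th1)*Y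
      + ((2-th1)*x + (thi+th1-1))*Y1 - (2*x-1)*Y1 - 2) :
    pviRes (-2) (2 - th1 - thi) th1 thi Y Y1 Y2 x = 0 := by
  have hxx : x*(x-1) ≠ 0 := mul_ne_zero hx0 hx1
  have hW : Y*((Y-1)*(Y-x)) ≠ 0 := mul_ne_zero hY0 (mul_ne_zero hY1 hYx)
  have hWW : x*(x-1)*(Y*((Y-1)*(Y-x))) ≠ 0 := mul_ne_zero hxx hW
  have hb : (x*(x-1))^2 * ((1/2)*((Y-1)*(Y-x) + Y*(Y-x) + Y*(Y-1))*Y1^2*(x*(x-1))^2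
        - ((x-1)*(Y*(Y-1)*(Y-x)) + x*(Y*(Y-1)*(Y-x)) + x*(x-1)*(Y*(Y-1)))*Y1*(x*(x-1))
        + (thi-1)^2/2*(Y*(Y-1)*(Y-x))^2 - 2*x*((Y-1)*(Y-x))^2
        + th1^2/2*(x-1)*(Y*(Y-x))^2 + (1/2 - (2-th1-thi)^2/2)*(x*(x-1))*(Y*(Y-1))^2)
      = (x*(x-1))^2 * ((2*(1-thi)*Y*Y1 + (2-th1)*Y + ((2-th1)*x + (thi+th1-1))*Y1
          - (2*x-1)*Y1 - 2) * (x*(x-1)*(Y*((Y-1)*(Y-x))))) := by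
    linear_combination (-x^4 + (2:ℂ)*x^5 - x^6 - (1/2:ℂ)*Y1*x^4 + (3/2:ℂ)*Y1*x^5 - (3/2:ℂ)*Y1*x^6 + (1/2:ℂ)*Y1*x^7 + (3/2:ℂ)*Y*x^3 - (1/2:ℂ)*Y*x^3*thi - (1/2:ℂ)*Y*x^3*th1 - Y*x^4 + Y*x^4*thi + (3/2:ℂ)*Y*x^4*th1 - (5/2:ℂ)*Y*x^5 - (1/2:ℂ)*Y*x^5*thi - (3/2:ℂ)*Y*x^5*th1 + (2:ℂ)*Y*x^6 + (1/2:ℂ)*Y*x^6*th1 + Y*Y1*x^3 - (2:ℂ)*Y*Y1*x^4 + (2:ℂ)*Y*Y1*x^6 - Y*Y1*x^7 - (7/2:ℂ)*Y^2*x^3 + (3/2:ℂ)*Y^2*x^3*thi + (6:ℂ)*Y^2*x^4 - (3:ℂ)*Y^2*x^4*thi - (3/2:ℂ)*Y^2*x^5 + (3/2:ℂ)*Y^2*x^5*thi - Y^2*x^6 - (3/2:ℂ)*Y^2*Y1*x^3 + (9/2:ℂ)*Y^2*Y1*x^4 - (9/2:ℂ)*Y^2*Y1*x^5 + (3/2:ℂ)*Y^2*Y1*x^6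 + (1/2:ℂ)*Y^3*x^2 - (1/2:ℂ)*Y^3*x^2*thi + (1/2:ℂ)*Y^3*x^2*th1 + Y^3*x^3 - (3/2:ℂ)*Y^3*x^3*th1 - (7/2:ℂ)*Y^3*x^4 + (3/2:ℂ)*Y^3*x^4*thi + (3/2:ℂ)*Y^3*x^4*th1 + (2:ℂ)*Y^3*x^5 - Y^3*x^5*thi - (1/2:ℂ)*Y^3*x^5*th1 - (1/2:ℂ)*Y^4*x^2 + (1/2:ℂ)*Y^4*x^2*thi + Y^4*x^3 - Y^4*x^3*thi - (1/2:ℂ)*Y^4*x^4 + (1/2:ℂ)*Y^4*x^4*thi) * h1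
  have p1 : ((1/2) * (1/Y + 1/(Y-1) + 1/(Y-x)) * Y1^2)
      * ((x*(x-1)) * (x*(x-1)*(Y*((Y-1)*(Y-x)))))
      = (1/2)*((Y-1)*(Y-x) + Y*(Y-x) + Y*(Y-1))*Y1^2*(x*(x-1))^2 := by
    field_simp
  have p2 : ((1/x + 1/(x-1) + 1/(Y-x)) * Y1)
      * ((x*(x-1)) * (x*(x-1)*(Y*((Y-1)*(Y-x)))))
      = ((x-1)*(Y*(Y-1)*(Y-x)) + x*(Y*(Y-1)*(Y-x)) + x*(x-1)*(Y*(Y-1)))*Y1*(x*(x-1)) := by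
    field_simp
  have p3a : ((Y*(Y-1)*(Y-x))/(x^2*(x-1)^2) * ((thi-1)^2/2))
      * ((x*(x-1)) * (x*(x-1)*(Y*((Y-1)*(Y-x)))))
      = (thi-1)^2/2*(Y*(Y-1)*(Y-x))^2 := by
    field_simp
  have p3b : ((Y*(Y-1)*(Y-x))/(x^2*(x-1)^2) * ((-((-2:ℂ)^2/2))*x/Y^2))
      * ((x*(x-1)) * (x*(x-1)*(Y*((Y-1)*(Y-x)))))
      = -2*x*((Y-1)*(Y-x))^2 := by
    field_simp
  have p3c : ((Y*(Y-1)*(Y-x))/(x^2*(x-1)^2) * ((th1^2/2)*(x-1)/(Y-1)^2))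
      * ((x*(x-1)) * (x*(x-1)*(Y*((Y-1)*(Y-x)))))
      = th1^2/2*(x-1)*(Y*(Y-x))^2 := by
    field_simp
  have p3d : ((Y*(Y-1)*(Y-x))/(x^2*(x-1)^2) * ((1/2 - (2 - th1 - thi)^2/2)*(x*(x-1))/(Y-x)^2))
      * ((x*(x-1)) * (x*(x-1)*(Y*((Y-1)*(Y-x)))))
      = (1/2 - (2-th1-thi)^2/2)*(x*(x-1))*(Y*(Y-1))^2 := by
    field_simp
  have ha : ((1/2) * (1/Y + 1/(Y-1) + 1/(Y-x)) * Y1^2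
      - (1/x + 1/(x-1) + 1/(Y-x)) * Y1
      + (Y*(Y-1)*(Y-x))/(x^2*(x-1)^2) *
        ((thi-1)^2/2 + (-((-2:ℂ)^2/2))*x/Y^2 + (th1^2/2)*(x-1)/(Y-1)^2
          + (1/2 - (2 - th1 - thi)^2/2)*(x*(x-1))/(Y-x)^2))
      * ((x*(x-1)) * (x*(x-1)*(Y*((Y-1)*(Y-x)))))
      = (1/2)*((Y-1)*(Y-x) + Y*(Y-x) + Y*(Y-1))*Y1^2*(x*(x-1))^2
        - ((x-1)*(Y*(Y-1)*(Y-x)) + x*(Y*(Y-1)*(Y-x)) + x*(x-1)*(Y*(Y-1)))*Y1*(x*(x-1))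
        + (thi-1)^2/2*(Y*(Y-1)*(Y-x))^2 - 2*x*((Y-1)*(Y-x))^2
        + th1^2/2*(x-1)*(Y*(Y-x))^2 + (1/2 - (2-th1-thi)^2/2)*(x*(x-1))*(Y*(Y-1))^2 := by
    linear_combination p1 - p2 + p3a + p3b + p3c + p3d
  have hFH : ((1/2) * (1/Y + 1/(Y-1) + 1/(Y-x)) * Y1^2
      - (1/x + 1/(x-1) + 1/(Y-x)) * Y1
      + (Y*(Y-1)*(Y-x))/(x^2*(x-1)^2) *
        ((thi-1)^2/2 + (-((-2:ℂ)^2/2))*x/Y^2 + (th1^2/2)*(x-1)/(Y-1)^2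
          + (1/2 - (2 - th1 - thi)^2/2)*(x*(x-1))/(Y-x)^2))
      * (x*(x-1))
      = 2*(1-thi)*Y*Y1 + (2-th1)*Y + ((2-th1)*x + (thi+th1-1))*Y1 - (2*x-1)*Y1 - 2 := by
    refine mul_right_cancel₀ hWW ?_
    rw [mul_assoc, ha]
    exact mul_left_cancel₀ (pow_ne_zero 2 hxx) hb
  unfold pviRes
  rw [sub_eq_zero]
  refine mul_left_cancel₀ hxx ?_
  rw [h2, ← hFH]
  ring

set_option maxHeartbeats 1000000 in
/-- For `θ0 + θx + θ1 + θ∞ = 0` and `θ0 = −2` (so `θx = 2−θ1−θ∞`), the rational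
function `y(x) = [(2−(θ∞+θ1)+θ1x)² − 2 + θ∞ + θ1 − θ1x²]/[(1−θ∞)(2−(θ∞+θ1)+θ1x)]`
solves Painlevé VI with parameters `(−2, 2−θ1−θ∞, θ1, θ∞)` away from `0, 1` and
the zeros of the denominator. -/
theorem rational_solution_theta0_neg_two
    (th1 thi : ℂ) (hthi : thi ≠ 1)
    (x : ℂ) (hx0 : x ≠ 0) (hx1 : x ≠ 1)
    (hden : 2 - (thi + th1) + th1*x ≠ 0)
    (hy0 : ratY2 th1 thi x ≠ 0) (hy1 : ratY2 th1 thi x ≠ 1)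
    (hyx : ratY2 th1 thi x ≠ x) :
    pviRes (-2) (2 - th1 - thi) th1 thi (ratY2 th1 thi x)
      (deriv (ratY2 th1 thi) x) (deriv (deriv (ratY2 th1 thi)) x) x = 0 := by
  have h1 : (1:ℂ) - thi ≠ 0 := sub_ne_zero.mpr (Ne.symm hthi)
  have hcont : Continuous fun z : ℂ => 2 - (thi + th1) + th1*z := by continuity
  have hU : IsOpen {z : ℂ | 2 - (thi + th1) + th1*z ≠ 0} :=
    isOpen_compl_singleton.preimage hcont
  have hev : deriv (ratY2 th1 thi) =ᶠ[nhds x] ratY2' th1 thi := by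
    filter_upwards [hU.mem_nhds hden] with z hz
    exact (hasDerivAt_ratY2 th1 thi hthi z hz).deriv
  have hd1 : deriv (ratY2 th1 thi) x = ratY2' th1 thi x :=
    (hasDerivAt_ratY2 th1 thi hthi x hden).deriv
  have hd2 : deriv (deriv (ratY2 th1 thi)) x = ratY2'' th1 thi x := by
    rw [hev.deriv_eq]
    exact (hasDerivAt_ratY2' th1 thi hthi x hden).deriv
  rw [hd1, hd2]
  have hD0 : (1 - thi)*(2 - (thi + th1) + th1*x) ≠ 0 := mul_ne_zero h1 hden
  have hD2 : (1 - thi)*(2 - (thi + th1) + th1*x)^2 ≠ 0 :=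
    mul_ne_zero h1 (pow_ne_zero 2 hden)
  have hD3 : (1 - thi)*(2 - (thi + th1) + th1*x)^3 ≠ 0 :=
    mul_ne_zero h1 (pow_ne_zero 3 hden)
  have mA : ratY2 th1 thi x * ((1 - thi)*(2 - (thi + th1) + th1*x))
      = (2 - (thi + th1) + th1*x)^2 - 2 + thi + th1 - th1*x^2 := by
    unfold ratY2; exact div_mul_cancel₀ _ hD0
  have mB : ratY2' th1 thi x * ((1 - thi)*(2 - (thi + th1) + th1*x)^2)
      = th1 * ((2 - (thi + th1) + th1*x - x)^2 + (th1-1)*x^2 + (2 - thi - th1)) := by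
    unfold ratY2'; exact div_mul_cancel₀ _ hD2
  have mC : ratY2'' th1 thi x * ((1 - thi)*(2 - (thi + th1) + th1*x)^3)
      = -2*th1*(2 - thi - th1)*(2 - thi) := by
    unfold ratY2''; exact div_mul_cancel₀ _ hD3
  have hR1 : x*(x-1)*(ratY2' th1 thi x) = (1-thi)*(ratY2 th1 thi x)^2
      + ((2-th1)*x + (thi+th1-1))*(ratY2 th1 thi x) - 2*x := by
    refine mul_right_cancel₀ hD2 ?_
    linear_combination (x*(x-1)) * mB
      - ((1-thi)*(2 - (thi + th1) + th1*x)*(ratY2 th1 thi x)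
          + ((2 - (thi + th1) + th1*x)^2 - 2 + thi + th1 - th1*x^2)
          + ((2-th1)*x + (thi+th1-1))*(2 - (thi + th1) + th1*x)) * mA
  have hR2 : x*(x-1)*(ratY2'' th1 thi x)
      = 2*(1-thi)*(ratY2 th1 thi x)*(ratY2' th1 thi x)
      + (2-th1)*(ratY2 th1 thi x)
      + ((2-th1)*x + (thi+th1-1))*(ratY2' th1 thi x)
      - (2*x-1)*(ratY2' th1 thi x) - 2 := by
    refine mul_right_cancel₀ (mul_ne_zero h1 hD3) ?_
    linear_combination (x*(x-1)*(1-thi)) * mC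
      - (2*(1-thi)^2*(2 - (thi + th1) + th1*x)^2*(ratY2' th1 thi x)
          + (2-th1)*(1-thi)*(2 - (thi + th1) + th1*x)^2) * mA
      - (2*(1-thi)*((2 - (thi + th1) + th1*x)^2 - 2 + thi + th1 - th1*x^2)
          + (((2-th1)*x + (thi+th1-1)) - (2*x-1))*(1-thi)*(2 - (thi + th1) + th1*x)) * mB
  exact riccati_pvi th1 thi _ _ _ x hx0 (sub_ne_zero.mpr hx1) hy0
    (sub_ne_zero.mpr hy1) (sub_ne_zero.mpr hyx) hR1 hR2
end

section
/- Define the monodromy matrices M0 = G·exp(iπθx σ3)·G⁻¹, Mx = G·exp(−iπθx σ3)·G⁻¹, M1 = M∞ = exp(−iπθ∞ σ3), where G = [[1,1],[(s+θx)/r, s/r]], σ3 = diag(1,−1), r ≠ 0, θx ≠ 0. Then M0·Mx = I, and tr(M1 M0) = 2cos(π(θ∞+θx)) − (2s/θx)[cos(π(θ∞−θx)) − cos(π(θ∞+θx))]; consequently s = θx[2cos(π(θ∞+θx)) − tr(M1 M0)] / (2[cos(π(θ∞−θx)) − cos(π(θ∞+θx))]) whenever the denominator is nonzero. -/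
open Matrix

/-- `exp(iπθ σ3) = diag(e^{iπθ}, e^{−iπθ})`. -/
noncomputable def expPiSigma3 (θ : ℂ) : Matrix (Fin 2) (Fin 2) ℂ :=
  !![Complex.exp ((Real.pi : ℂ) * Complex.I * θ), 0;
     0, Complex.exp (-((Real.pi : ℂ) * Complex.I * θ))]

/-- The matrix `G = [[1,1],[(s+θx)/r, s/r]]`. -/
noncomputable def Gmat (s thx r : ℂ) : Matrix (Fin 2) (Fin 2) ℂ :=
  !![1, 1; (s + thx)/r, s/r]

set_option maxHeartbeats 2000000 in
/-- For `M0 = G exp(iπθx σ3) G⁻¹`, `Mx = G exp(−iπθx σ3) G⁻¹`,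
`M1 = M∞ = exp(−iπθ∞ σ3)`: one has `M0 Mx = I`,
`tr(M1M0) = 2cos(π(θ∞+θx)) − (2s/θx)[cos(π(θ∞−θx)) − cos(π(θ∞+θx))]`,
and hence `s = θx[2cos(π(θ∞+θx)) − tr(M1M0)]/(2[cos(π(θ∞−θx)) − cos(π(θ∞+θx))])`
whenever the denominator is nonzero. -/
theorem monodromy_trace_identity (r s thx thi : ℂ) (hr : r ≠ 0) (hthx : thx ≠ 0) :
    (Gmat s thx r * expPiSigma3 thx * (Gmat s thx r)⁻¹) *
        (Gmat s thx r * expPiSigma3 (-thx) * (Gmat s thx r)⁻¹) = 1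
    ∧ (expPiSigma3 (-thi) *
          (Gmat s thx r * expPiSigma3 thx * (Gmat s thx r)⁻¹)).trace
        = 2 * Complex.cos ((Real.pi : ℂ) * (thi + thx))
          - (2*s/thx) * (Complex.cos ((Real.pi : ℂ) * (thi - thx))
              - Complex.cos ((Real.pi : ℂ) * (thi + thx)))
    ∧ (Complex.cos ((Real.pi : ℂ) * (thi - thx))
          - Complex.cos ((Real.pi : ℂ) * (thi + thx)) ≠ 0 →
        s = thx * (2 * Complex.cos ((Real.pi : ℂ) * (thi + thx))
              - (expPiSigma3 (-thi) *
                  (Gmat s thx r * expPiSigma3 thx * (Gmat s thx r)⁻¹)).trace)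
            / (2 * (Complex.cos ((Real.pi : ℂ) * (thi - thx))
                - Complex.cos ((Real.pi : ℂ) * (thi + thx))))) := by
  set p : ℂ := (Real.pi : ℂ) with hp
  set a : ℂ := Complex.exp (p * Complex.I * thx) with ha
  set a' : ℂ := Complex.exp (-(p * Complex.I * thx)) with ha'
  set b : ℂ := Complex.exp (p * Complex.I * thi) with hb
  set b' : ℂ := Complex.exp (-(p * Complex.I * thi)) with hb'
  have haa : a * a' = 1 := by
    rw [ha, ha', ← Complex.exp_add, add_neg_cancel, Complex.exp_zero]
  have hEx : expPiSigma3 thx = !![a, 0; 0, a'] := by rw [expPiSigma3]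
  have hExn : expPiSigma3 (-thx) = !![a', 0; 0, a] := by
    rw [expPiSigma3, mul_neg, neg_neg]
  have hEin : expPiSigma3 (-thi) = !![b', 0; 0, b] := by
    rw [expPiSigma3, mul_neg, neg_neg]
  have hc1 : Complex.cos (p * (thi + thx)) = (b * a + b' * a') / 2 := by
    rw [Complex.cos,
      show p * (thi + thx) * Complex.I = p * Complex.I * thi + p * Complex.I * thx by ring,
      show -(p * (thi + thx)) * Complex.I
        = -(p * Complex.I * thi) + -(p * Complex.I * thx) by ring,
      Complex.exp_add, Complex.exp_add]
  have hc2 : Complex.cos (p * (thi - thx)) = (b * a' + b' * a) / 2 := by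
    rw [Complex.cos,
      show p * (thi - thx) * Complex.I = p * Complex.I * thi + -(p * Complex.I * thx) by ring,
      show -(p * (thi - thx)) * Complex.I
        = -(p * Complex.I * thi) + p * Complex.I * thx by ring,
      Complex.exp_add, Complex.exp_add]
  clear_value a a' b b' p
  have hEE : expPiSigma3 thx * expPiSigma3 (-thx) = 1 := by
    rw [hEx, hExn, Matrix.mul_fin_two, Matrix.one_fin_two, haa]
    norm_num [mul_comm a' a, haa]
  have hGH : Gmat s thx r * !![-s/thx, r/thx; (s+thx)/thx, -r/thx] = 1 := by
    rw [Gmat, Matrix.mul_fin_two, Matrix.one_fin_two]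
    ext i j
    fin_cases i <;> fin_cases j <;>
      simp only [Matrix.of_apply, Matrix.cons_val', Matrix.cons_val_zero, Matrix.empty_val',
        Matrix.cons_val_fin_one, Matrix.cons_val_one, Matrix.head_cons, Matrix.head_fin_const,
        Fin.isValue, Fin.zero_eta, Fin.mk_one] <;>
      field_simp <;> ring
  have hHG : !![-s/thx, r/thx; (s+thx)/thx, -r/thx] * Gmat s thx r = 1 := by
    rw [Gmat, Matrix.mul_fin_two, Matrix.one_fin_two]
    ext i j
    fin_cases i <;> fin_cases j <;>
      simp only [Matrix.of_apply, Matrix.cons_val', Matrix.cons_val_zero, Matrix.empty_val',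
        Matrix.cons_val_fin_one, Matrix.cons_val_one, Matrix.head_cons, Matrix.head_fin_const,
        Fin.isValue, Fin.zero_eta, Fin.mk_one] <;>
      field_simp <;> ring
  have hGinv : (Gmat s thx r)⁻¹ = !![-s/thx, r/thx; (s+thx)/thx, -r/thx] :=
    inv_eq_right_inv hGH
  have h2 : (expPiSigma3 (-thi) *
          (Gmat s thx r * expPiSigma3 thx * (Gmat s thx r)⁻¹)).trace
        = 2 * Complex.cos (p * (thi + thx))
          - (2*s/thx) * (Complex.cos (p * (thi - thx))
              - Complex.cos (p * (thi + thx))) := by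
    rw [hEin, hEx, hGinv, Gmat, hc1, hc2,
      Matrix.mul_fin_two, Matrix.mul_fin_two, Matrix.mul_fin_two,
      Matrix.trace_fin_two_of]
    field_simp
    ring
  refine ⟨?_, h2, ?_⟩
  · rw [hGinv,
      show Gmat s thx r * expPiSigma3 thx * !![-s/thx, r/thx; (s+thx)/thx, -r/thx] *
          (Gmat s thx r * expPiSigma3 (-thx) * !![-s/thx, r/thx; (s+thx)/thx, -r/thx])
        = Gmat s thx r * (expPiSigma3 thx *
            ((!![-s/thx, r/thx; (s+thx)/thx, -r/thx] * Gmat s thx r) *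
              expPiSigma3 (-thx)) * !![-s/thx, r/thx; (s+thx)/thx, -r/thx]) from by
        simp only [Matrix.mul_assoc],
      hHG, Matrix.one_mul, hEE, Matrix.one_mul, hGH]
  · intro hd
    rw [h2]
    field_simp
    ring
end
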